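/- Let 0 < α < π/2 and let R be a linear isometry of EuclideanSpace ℝ (Fin 3) fixing the vector m = (cos α, 0, sin α), i.e. R m = m. Let a = (c₁, c₂, 0) with c₁, c₂ real, and suppose the third coordinate of R a is 0 and R a ≠ a. Then R a = (c₁, −c₂, 0). -/

import Mathlib

open Real RealInnerProductSpace

/-- Relation between consecutive corner points of an extremal: a linear isometry of `ℝ³`
fixing the tilted axis `m = (cos α, 0, sin α)` which maps `a = (c₁, c₂, 0)` to a different
vector whose third coordinate vanishes must map it to `(c₁, −c₂, 0)`. -/
theorem corner_point_reflection (α : ℝ) (hα₀ : 0 < α) (hα₁ : α < π / 2)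
    (R : EuclideanSpace ℝ (Fin 3) →ₗᵢ[ℝ] EuclideanSpace ℝ (Fin 3))
    (m : EuclideanSpace ℝ (Fin 3)) (hm : m = ![Real.cos α, 0, Real.sin α])
    (hRm : R m = m)
    (c₁ c₂ : ℝ) (a : EuclideanSpace ℝ (Fin 3)) (ha : a = ![c₁, c₂, 0])
    (hz : R a 2 = 0) (hne : R a ≠ a) :
    R a = ![c₁, -c₂, 0] := by
  have hcos : Real.cos α ≠ 0 := by
    have := Real.cos_pos_of_mem_Ioo ⟨by linarith [Real.pi_pos], hα₁⟩
    linarith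
  set b : EuclideanSpace ℝ (Fin 3) := R a with hb
  have h1 : (inner ℝ b m : ℝ) = (inner ℝ a m : ℝ) := by
    conv_lhs => rw [hb, ← hRm]
    exact R.inner_map_map a m
  have h2 : (inner ℝ b b : ℝ) = (inner ℝ a a : ℝ) := R.inner_map_map a a
  simp only [PiLp.inner_apply, Fin.sum_univ_three, RCLike.inner_apply,
    starRingEnd_apply, star_trivial, hm, ha, hz,
    Matrix.cons_val_zero, Matrix.cons_val_one, Matrix.head_cons,
    Matrix.cons_val_two, Matrix.tail_cons] at h1 h2
  have hx : b 0 = c₁ := by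
    have := mul_right_cancel₀ hcos (by linarith : b 0 * Real.cos α = c₁ * Real.cos α)
    exact this
  have hy : b 1 = c₂ ∨ b 1 = -c₂ := by
    have hsq : b 1 * b 1 = c₂ * c₂ := by rw [hx] at h2; linarith
    exact mul_self_eq_mul_self_iff.mp hsq
  rcases hy with hy | hy
  · exfalso
    apply hne
    apply WithLp.ofLp_injective
    funext i
    fin_cases i
    · rw [ha]; simpa using hx
    · rw [ha]; simpa using hy
    · rw [ha]; simpa using hz
  · funext i
    fin_cases i
    · simpa using hx
    · simpa using hy
    · simpa using hz
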